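/- Let F = FreeGroup α be the free group on a type α having two distinct elements, let H = ℤ × F, and let H' be a finite-index subgroup of H. Set Z' = H' ∩ (ℤ × {1}). Then there exists a subgroup K of H with K ≤ H' such that K is a free group, Z' ⊓ K = ⊥, and Z' ⊔ K = H'. In particular, H' is the internal direct product of Z' and a free group (note every element of Z' is central in H, so Z' and K commute elementwise). -/

import Mathlib

/-- Let `F = FreeGroup α` with `α` having two distinct elements, `H = ℤ × F`,
and `H'` a finite-index subgroup of `H`. Set `Z' = H' ∩ (ℤ × {1})`. Then there
is a subgroup `K ≤ H'` that is a free group with `Z' ⊓ K = ⊥` and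
`Z' ⊔ K = H'`. -/
theorem finiteIndex_subgroup_internal_product {α : Type*} (a b : α) (hab : a ≠ b)
    (H' : Subgroup (Multiplicative ℤ × FreeGroup α)) (hfi : H'.index ≠ 0) :
    ∃ K : Subgroup (Multiplicative ℤ × FreeGroup α),
      K ≤ H' ∧ IsFreeGroup K ∧
      (H' ⊓ Subgroup.prod (⊤ : Subgroup (Multiplicative ℤ))
        (⊥ : Subgroup (FreeGroup α))) ⊓ K = ⊥ ∧
      (H' ⊓ Subgroup.prod (⊤ : Subgroup (Multiplicative ℤ))
        (⊥ : Subgroup (FreeGroup α))) ⊔ K = H' := by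
  classical
  set π : Multiplicative ℤ × FreeGroup α →* FreeGroup α :=
    MonoidHom.snd _ _ with hπ
  set F' : Subgroup (FreeGroup α) := H'.map π with hF'
  have hmem : ∀ h : H', π (h : Multiplicative ℤ × FreeGroup α) ∈ F' := by
    rintro ⟨h, hh⟩; exact ⟨h, hh, rfl⟩
  let f : H' →* F' := (π.comp H'.subtype).codRestrict F' hmem
  have hf_surj : Function.Surjective f := by
    rintro ⟨y, h, hh, rfl⟩
    exact ⟨⟨h, hh⟩, rfl⟩
  choose sec hsec using fun x : IsFreeGroup.Generators F' =>
    hf_surj (IsFreeGroup.of x)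
  let s : F' →* H' := IsFreeGroup.lift sec
  have hfs : ∀ x : F', f (s x) = x := by
    have h1 : f.comp s = MonoidHom.id F' := by
      apply IsFreeGroup.ext_hom
      intro x
      simp [s, IsFreeGroup.lift_of, hsec]
    intro x
    exact DFunLike.congr_fun h1 x
  let t : F' →* (Multiplicative ℤ × FreeGroup α) := H'.subtype.comp s
  have htH' : ∀ x : F', t x ∈ H' := fun x => (s x).2
  have hπt : ∀ x : F', π (t x) = (x : FreeGroup α) := by
    intro x
    have := congrArg Subtype.val (hfs x)
    exact this
  refine ⟨t.range, ?_, ?_, ?_, ?_⟩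
  · rintro _ ⟨x, rfl⟩
    exact htH' x
  · have ht_inj : Function.Injective t := by
      intro x y hxy
      have : (x : FreeGroup α) = y := by rw [← hπt x, ← hπt y, hxy]
      exact Subtype.ext this
    exact IsFreeGroup.ofMulEquiv (MonoidHom.ofInjective ht_inj)
  · rw [eq_bot_iff]
    rintro g ⟨⟨hgH, hgZ⟩, x, rfl⟩
    have h2 : (t x).2 ∈ (⊥ : Subgroup (FreeGroup α)) :=
      ((Subgroup.mem_prod).mp hgZ).2
    have h2' : (x : FreeGroup α) = 1 := by
      rw [← hπt x]; exact Subgroup.mem_bot.mp h2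
    have hx1 : x = 1 := Subtype.ext (by simpa using h2')
    simp [hx1]
  · apply le_antisymm
    · exact sup_le inf_le_left (by rintro _ ⟨x, rfl⟩; exact htH' x)
    · intro h hh
      set x : F' := f ⟨h, hh⟩ with hx
      have hk : t x ∈ t.range := ⟨x, rfl⟩
      have hπx : π (t x) = π h := by
        rw [hπt x, hx]; rfl
      have hz : h * (t x)⁻¹ ∈
          H' ⊓ Subgroup.prod (⊤ : Subgroup (Multiplicative ℤ))
            (⊥ : Subgroup (FreeGroup α)) := by
        rw [Subgroup.mem_inf]
        refine ⟨mul_mem hh (inv_mem (htH' x)), ?_⟩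
        rw [Subgroup.mem_prod]
        refine ⟨trivial, ?_⟩
        have : (h * (t x)⁻¹).2 = π h * (π (t x))⁻¹ := rfl
        rw [Subgroup.mem_bot, this, hπx, mul_inv_cancel]
      have : h = (h * (t x)⁻¹) * t x := by group
      rw [this]
      exact mul_mem (le_sup_left (α := Subgroup _) hz)
        (le_sup_right (α := Subgroup _) hk)
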